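/- Let F be a free group on two or more generators and let σ, τ be two of its free generators. Let w be an element of F whose reduced word in σ, τ consists of a (possibly empty) block of inverse generators (σ⁻¹ and τ⁻¹) followed by a block of generators (σ and τ), with strictly more letters in the positive block than the negative block, and whose rightmost letter is σ. Let w' be an element of the same form except that its rightmost letter is τ. Then w and w' do not commute. -/

import Mathlib

namespace Stmt17Aux

variable {α : Type*}

/-- Non-cancelling relation on letters of free-group words. -/
def RR : (α × Bool) → (α × Bool) → Prop := fun x y => ¬(x.1 = y.1 ∧ x.2 = !y.2)

lemma rr_of_same_sign {x y : α × Bool} (h : x.2 = y.2) : RR x y := by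
  rintro ⟨-, h2⟩
  rw [h] at h2
  simp at h2

lemma chain'_of_sign {s : Bool} : ∀ {l : List (α × Bool)}, (∀ x ∈ l, x.2 = s) → l.Chain' RR
  | [], _ => List.isChain_nil
  | [_], _ => List.isChain_singleton _
  | x :: y :: l, h => by
    show List.IsChain RR _
    rw [List.isChain_cons_cons]
    refine ⟨rr_of_same_sign ?_, chain'_of_sign fun z hz => h z (List.mem_cons_of_mem _ hz)⟩
    rw [h x (by simp), h y (by simp)]

lemma reduce_eq_self [DecidableEq α] :
    ∀ {L : List (α × Bool)}, L.Chain' RR → FreeGroup.reduce L = L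
  | [], _ => rfl
  | x :: L, h => by
    have htail : L.Chain' RR := h.tail
    rw [FreeGroup.reduce.cons, reduce_eq_self htail]
    cases L with
    | nil => rfl
    | cons hd tl =>
      have : RR x hd := (List.isChain_cons_cons.1 h).1
      simp only [RR] at this
      exact if_neg this

lemma mk_neg_singleton (c : α) : FreeGroup.mk [(c, false)] = (FreeGroup.of c)⁻¹ := by
  rw [show (FreeGroup.of c) = FreeGroup.mk [(c, true)] from rfl, FreeGroup.inv_mk]
  rfl

lemma mk_cancel (c : α) (L M : List (α × Bool)) :
    FreeGroup.mk (L ++ (c, true) :: (c, false) :: M) = FreeGroup.mk (L ++ M) := by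
  have h : ((c, true) :: (c, false) :: M : List (α × Bool)) =
      [(c, true)] ++ ([(c, false)] ++ M) := rfl
  rw [← FreeGroup.mul_mk, ← FreeGroup.mul_mk, h, ← FreeGroup.mul_mk, ← FreeGroup.mul_mk,
    mk_neg_singleton, show FreeGroup.mk [(c, true)] = FreeGroup.of c from rfl,
    mul_inv_cancel_left]

lemma mk_cancel' (c : α) (L M : List (α × Bool)) :
    FreeGroup.mk (L ++ (c, false) :: (c, true) :: M) = FreeGroup.mk (L ++ M) := by
  have h : ((c, false) :: (c, true) :: M : List (α × Bool)) =
      [(c, false)] ++ ([(c, true)] ++ M) := rfl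
  rw [← FreeGroup.mul_mk, ← FreeGroup.mul_mk, h, ← FreeGroup.mul_mk, ← FreeGroup.mul_mk,
    mk_neg_singleton, show FreeGroup.mk [(c, true)] = FreeGroup.of c from rfl,
    inv_mul_cancel_left]

lemma prod_pos (l : List α) :
    (l.map FreeGroup.of).prod = FreeGroup.mk (l.map fun x => (x, true)) := by
  induction l with
  | nil => simp [FreeGroup.one_eq_mk]
  | cons x l ih =>
    rw [List.map_cons, List.prod_cons, List.map_cons, ih,
      show (FreeGroup.of x) = FreeGroup.mk [(x, true)] from rfl, FreeGroup.mul_mk]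
    rfl

lemma prod_neg (l : List α) :
    (l.map fun x => (FreeGroup.of x)⁻¹).prod = FreeGroup.mk (l.map fun x => (x, false)) := by
  induction l with
  | nil => simp [FreeGroup.one_eq_mk]
  | cons x l ih =>
    rw [List.map_cons, List.prod_cons, List.map_cons, ih, ← mk_neg_singleton,
      FreeGroup.mul_mk]
    rfl

/-- Lemma A: a negative block followed by a strictly longer positive block can be put
into reduced form, preserving the last letter. -/
lemma lemA : ∀ (n p : List (α × Bool)),
    (∀ x ∈ n, x.2 = false) → (∀ x ∈ p, x.2 = true) → n.length < p.length →
    ∃ m q : List (α × Bool), FreeGroup.mk (n ++ p) = FreeGroup.mk (m ++ q) ∧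
      (∀ x ∈ m, x.2 = false) ∧ (∀ x ∈ q, x.2 = true) ∧ m.length < q.length ∧
      (m ++ q).Chain' RR ∧ q.getLast? = p.getLast? ∧ q ≠ [] := by
  intro n
  induction n using List.reverseRecOn with
  | nil =>
    intro p _ hp hlen
    exact ⟨[], p, rfl, by simp, hp, hlen, chain'_of_sign hp,
      rfl, List.ne_nil_of_length_pos (by simpa using hlen)⟩
  | append_singleton m x ih =>
    intro p hn hp hlen
    obtain ⟨x1, x2⟩ := x
    have hx2 : x2 = false := hn (x1, x2) (by simp)
    subst hx2
    cases p with
    | nil => simp at hlen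
    | cons y p' =>
      obtain ⟨y1, y2⟩ := y
      have hy2 : y2 = true := hp (y1, y2) (by simp)
      subst hy2
      by_cases hxy : x1 = y1
      · subst hxy
        have key : FreeGroup.mk ((m ++ [(x1, false)]) ++ (x1, true) :: p') =
            FreeGroup.mk (m ++ p') := by
          have h1 : (m ++ [(x1, false)]) ++ (x1, true) :: p' =
              m ++ (x1, false) :: (x1, true) :: p' := by simp
          rw [h1, mk_cancel']
        have hlen' : m.length < p'.length := by
          simp only [List.length_append, List.length_cons, List.length] at hlen ⊢
          omega
        have hp'ne : p' ≠ [] := List.ne_nil_of_length_pos (by omega)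
        obtain ⟨m₁, q₁, heq, hm₁, hq₁, hl₁, hc₁, hlast₁, hq₁ne⟩ :=
          ih p' (fun z hz => hn z (List.mem_append_left _ hz))
            (fun z hz => hp z (List.mem_cons_of_mem _ hz)) hlen'
        refine ⟨m₁, q₁, key.trans heq, hm₁, hq₁, hl₁, hc₁, ?_, hq₁ne⟩
        rw [hlast₁, show ((x1, true) :: p' : List (α × Bool)) = [(x1, true)] ++ p' from rfl,
          List.getLast?_append_of_ne_nil _ hp'ne]
      · refine ⟨m ++ [(x1, false)], (y1, true) :: p', rfl, hn, hp, hlen, ?_, rfl, by simp⟩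
        show List.IsChain RR _
        rw [List.isChain_append]
        refine ⟨chain'_of_sign hn, chain'_of_sign hp, ?_⟩
        intro z hz w hw
        rw [List.getLast?_concat, Option.mem_def, Option.some_inj] at hz
        rw [List.head?_cons, Option.mem_def, Option.some_inj] at hw
        subst hz; subst hw
        exact fun h => hxy h.1

/-- Lemma B: the reduced word of a negative block followed by a strictly longer
positive block ends with the last letter of the positive block. -/
lemma lemB [DecidableEq α] (n p : List (α × Bool))
    (hn : ∀ x ∈ n, x.2 = false) (hp : ∀ x ∈ p, x.2 = true) (hlen : n.length < p.length) :
    (FreeGroup.mk (n ++ p)).toWord.getLast? = p.getLast? := by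
  obtain ⟨m, q, heq, _, _, _, hc, hlast, hqne⟩ := lemA n p hn hp hlen
  rw [heq, FreeGroup.toWord_mk, reduce_eq_self hc, List.getLast?_append_of_ne_nil _ hqne, hlast]

/-- Lemma C: the main combinatorial lemma for products of two such words. -/
lemma lemC [DecidableEq α] : ∀ (n' n p p' : List (α × Bool)),
    (∀ x ∈ n, x.2 = false) → (∀ x ∈ p, x.2 = true) →
    (∀ x ∈ n', x.2 = false) → (∀ x ∈ p', x.2 = true) →
    (n ++ p).Chain' RR → (n' ++ p').Chain' RR →
    n.length + n'.length + 2 ≤ p.length + p'.length → p' ≠ [] →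
    (FreeGroup.mk (n ++ p ++ n' ++ p')).toWord.getLast? = p'.getLast? := by
  intro n'
  induction n' with
  | nil =>
    intro n p p' hn hp _ hp' _ _ hlen hp'ne
    have h1 : n ++ p ++ [] ++ p' = n ++ (p ++ p') := by simp
    rw [h1, lemB n (p ++ p') hn (by
        intro z hz
        rcases List.mem_append.1 hz with h | h
        exacts [hp z h, hp' z h])
      (by simp only [List.length_append, List.length_nil] at hlen ⊢; omega)]
    exact List.getLast?_append_of_ne_nil _ hp'ne
  | cons y m' ih =>
    intro n p p' hn hp hn' hp' hcnp hcn'p' hlen hp'ne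
    obtain ⟨y1, y2⟩ := y
    have hy2 : y2 = false := hn' (y1, y2) (by simp)
    subst hy2
    rcases p.eq_nil_or_concat' with rfl | ⟨q, x, rfl⟩
    · -- p empty : merge the two negative blocks
      have h1 : n ++ [] ++ ((y1, false) :: m') ++ p' = (n ++ ((y1, false) :: m')) ++ p' := by simp
      rw [h1, lemB _ p' (by
          intro z hz
          rcases List.mem_append.1 hz with h | h
          exacts [hn z h, hn' z h])
        hp' (by simp only [List.length_append, List.length_cons, List.length_nil] at hlen ⊢; omega)]
    · obtain ⟨x1, x2⟩ := x
      have hx2 : x2 = true := hp (x1, x2) (by simp)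
      subst hx2
      by_cases hxy : x1 = y1
      · -- cancellation at the junction
        subst hxy
        have key : FreeGroup.mk (n ++ (q ++ [(x1, true)]) ++ ((x1, false) :: m') ++ p') =
            FreeGroup.mk (n ++ q ++ m' ++ p') := by
          have h1 : n ++ (q ++ [(x1, true)]) ++ ((x1, false) :: m') ++ p' =
              (n ++ q) ++ (x1, true) :: (x1, false) :: (m' ++ p') := by simp
          have h2 : n ++ q ++ m' ++ p' = (n ++ q) ++ (m' ++ p') := by simp
          rw [h1, h2, mk_cancel]
        rw [key]
        refine ih n q p' hn (fun z hz => hp z (List.mem_append_left _ hz))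
          (fun z hz => hn' z (List.mem_cons_of_mem _ hz)) hp'
          (hcnp.prefix (by simp [List.prefix_append_right_inj]))
          hcn'p'.tail
          (by simp only [List.length_append, List.length_cons, List.length_nil] at hlen ⊢; omega)
          hp'ne
      · -- no cancellation : the whole word is reduced
        have hchain : ((n ++ (q ++ [(x1, true)])) ++ (((y1, false) :: m') ++ p')).Chain' RR := by
          show List.IsChain RR _
          rw [List.isChain_append]
          refine ⟨hcnp, hcn'p', ?_⟩
          intro z hz w hw
          rw [List.getLast?_append_of_ne_nil _ (by simp), List.getLast?_concat,
            Option.mem_def, Option.some_inj] at hz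
          simp only [List.cons_append, List.head?_cons, Option.mem_def,
            Option.some_inj] at hw
          subst hz; subst hw
          exact fun h => hxy h.1
        have h1 : n ++ (q ++ [(x1, true)]) ++ ((y1, false) :: m') ++ p' =
            (n ++ (q ++ [(x1, true)])) ++ (((y1, false) :: m') ++ p') := by simp
        rw [h1, FreeGroup.toWord_mk, reduce_eq_self hchain,
          List.getLast?_append_of_ne_nil _ (by simp [hp'ne]),
          List.getLast?_append_of_ne_nil _ hp'ne]

end Stmt17Aux

/-- Let `w` be a word in the free generators `σ = of a`, `τ = of b` consisting of a
block of inverse generators followed by a strictly longer block of generators whose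
rightmost letter is `σ`, and let `w'` have the same form with rightmost letter `τ`.
Then `w` and `w'` do not commute. -/
theorem stmt17 {α : Type*} (a b : α) (hab : a ≠ b)
    (nw pw nw' pw' : List α)
    (hnw : ∀ x ∈ nw, x = a ∨ x = b) (hpw : ∀ x ∈ pw, x = a ∨ x = b)
    (hnw' : ∀ x ∈ nw', x = a ∨ x = b) (hpw' : ∀ x ∈ pw', x = a ∨ x = b)
    (hlen : nw.length < pw.length) (hlen' : nw'.length < pw'.length)
    (hlast : pw.getLast? = some a) (hlast' : pw'.getLast? = some b)
    (w w' : FreeGroup α)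
    (hw : w = (nw.map (fun x => (FreeGroup.of x)⁻¹)).prod * (pw.map FreeGroup.of).prod)
    (hw' : w' = (nw'.map (fun x => (FreeGroup.of x)⁻¹)).prod * (pw'.map FreeGroup.of).prod) :
    w * w' ≠ w' * w := by
  classical
  set N := nw.map (fun x => (x, false)) with hN
  set P := pw.map (fun x => (x, true)) with hP
  set N' := nw'.map (fun x => (x, false)) with hN'
  set P' := pw'.map (fun x => (x, true)) with hP'
  have hsN : ∀ x ∈ N, x.2 = false := by
    intro x hx; rw [hN] at hx; obtain ⟨t, -, rfl⟩ := List.mem_map.1 hx; rfl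
  have hsP : ∀ x ∈ P, x.2 = true := by
    intro x hx; rw [hP] at hx; obtain ⟨t, -, rfl⟩ := List.mem_map.1 hx; rfl
  have hsN' : ∀ x ∈ N', x.2 = false := by
    intro x hx; rw [hN'] at hx; obtain ⟨t, -, rfl⟩ := List.mem_map.1 hx; rfl
  have hsP' : ∀ x ∈ P', x.2 = true := by
    intro x hx; rw [hP'] at hx; obtain ⟨t, -, rfl⟩ := List.mem_map.1 hx; rfl
  have hlN : N.length < P.length := by rw [hN, hP]; simpa using hlen
  have hlN' : N'.length < P'.length := by rw [hN', hP']; simpa using hlen'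
  have hwm : w = FreeGroup.mk (N ++ P) := by
    rw [hw, Stmt17Aux.prod_neg, Stmt17Aux.prod_pos, FreeGroup.mul_mk]
  have hwm' : w' = FreeGroup.mk (N' ++ P') := by
    rw [hw', Stmt17Aux.prod_neg, Stmt17Aux.prod_pos, FreeGroup.mul_mk]
  obtain ⟨m, q, heq, hm, hq, hl, hc, hlastq, hqne⟩ := Stmt17Aux.lemA N P hsN hsP hlN
  obtain ⟨m', q', heq', hm', hq', hl', hc', hlastq', hqne'⟩ :=
    Stmt17Aux.lemA N' P' hsN' hsP' hlN'
  have hPl : P.getLast? = some (a, true) := by rw [hP, List.getLast?_map, hlast]; rfl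
  have hP'l : P'.getLast? = some (b, true) := by rw [hP', List.getLast?_map, hlast']; rfl
  have hww' : w * w' = FreeGroup.mk (m ++ q ++ m' ++ q') := by
    rw [hwm, hwm', heq, heq', FreeGroup.mul_mk,
      show (m ++ q) ++ (m' ++ q') = m ++ q ++ m' ++ q' by simp]
  have hw'w : w' * w = FreeGroup.mk (m' ++ q' ++ m ++ q) := by
    rw [hwm, hwm', heq, heq', FreeGroup.mul_mk,
      show (m' ++ q') ++ (m ++ q) = m' ++ q' ++ m ++ q by simp]
  have h1 : (w * w').toWord.getLast? = some (b, true) := by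
    rw [hww', Stmt17Aux.lemC m' m q q' hm hq hm' hq' hc hc' (by omega) hqne', hlastq', hP'l]
  have h2 : (w' * w).toWord.getLast? = some (a, true) := by
    rw [hw'w, Stmt17Aux.lemC m m' q' q hm' hq' hm hq hc' hc (by omega) hqne, hlastq, hPl]
  intro hcomm
  rw [hcomm, h2] at h1
  injection h1 with h
  have hba : a = b := congrArg Prod.fst h
  exact hab hba
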